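/- Let α > 0. For all nonnegative measurable functions f, g ∈ L²(0,∞), the integral H_α(f,g) = ∫_0^∞ ∫_0^∞ K_α(x,y) f(x) g(y) dy dx satisfies H_α(f,g) ≤ (2/α) · ‖f‖_{L²(0,∞)} ‖g‖_{L²(0,∞)}. -/

import Mathlib

open MeasureTheory Set

/-- Auxiliary kernel `kk α x y = x^α y^{α-1} / max(x,y)^{2α}`. -/
noncomputable def kk (α x y : ℝ) : ℝ := x ^ α * y ^ (α - 1) / max x y ^ (2*α)

lemma kk_nonneg {α x y : ℝ} (hx : 0 < x) (hy : 0 < y) : 0 ≤ kk α x y := by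
  unfold kk; positivity

lemma kk_eq_left {α x y : ℝ} (hx : 0 < x) (hy : y ∈ Ioc 0 x) :
    kk α x y = x ^ (-α) * y ^ (α - 1) := by
  unfold kk
  rw [max_eq_left hy.2, show x ^ α * y ^ (α - 1) / x ^ (2*α) = x ^ α / x ^ (2*α) * y ^ (α-1) by ring,
    ← Real.rpow_sub hx]
  ring_nf

lemma kk_eq_right {α x y : ℝ} (hx : 0 < x) (hy : y ∈ Ioi x) :
    kk α x y = x ^ α * y ^ (-α - 1) := by
  have hy0 : (0:ℝ) < y := hx.trans hy
  unfold kk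
  rw [max_eq_right (le_of_lt hy),
    show x ^ α * y ^ (α - 1) / y ^ (2*α) = x ^ α * (y ^ (α-1) / y ^ (2*α)) by ring,
    ← Real.rpow_sub hy0]
  ring_nf

lemma kk_integrableOn {α : ℝ} (hα : 0 < α) {x : ℝ} (hx : 0 < x) :
    IntegrableOn (kk α x) (Ioi 0) := by
  have h1 : IntegrableOn (kk α x) (Ioc 0 x) := by
    have hi : IntegrableOn (fun y : ℝ => y ^ (α - 1)) (Ioc 0 x) := by
      rw [← intervalIntegrable_iff_integrableOn_Ioc_of_le hx.le]
      exact intervalIntegral.intervalIntegrable_rpow' (by linarith)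
    have h' : IntegrableOn (fun y : ℝ => x ^ (-α) * y ^ (α - 1)) (Ioc 0 x) := hi.const_mul _
    exact h'.congr_fun (fun y hy => (kk_eq_left hx hy).symm) measurableSet_Ioc
  have h2 : IntegrableOn (kk α x) (Ioi x) := by
    have hi : IntegrableOn (fun y : ℝ => y ^ (-α - 1)) (Ioi x) :=
      integrableOn_Ioi_rpow_of_lt (by linarith) hx
    have h' : IntegrableOn (fun y : ℝ => x ^ α * y ^ (-α - 1)) (Ioi x) := hi.const_mul _
    exact h'.congr_fun (fun y hy => (kk_eq_right hx hy).symm) measurableSet_Ioi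
  rw [show Ioi (0:ℝ) = Ioc 0 x ∪ Ioi x from (Ioc_union_Ioi_eq_Ioi hx.le).symm]
  exact h1.union h2

lemma kk_integral {α : ℝ} (hα : 0 < α) {x : ℝ} (hx : 0 < x) :
    ∫ y in Ioi (0:ℝ), kk α x y = 2/α := by
  have hsplit : Ioi (0:ℝ) = Ioc 0 x ∪ Ioi x := (Ioc_union_Ioi_eq_Ioi hx.le).symm
  have hd : Disjoint (Ioc (0:ℝ) x) (Ioi x) := Ioc_disjoint_Ioi le_rfl
  have hint := kk_integrableOn hα hx
  rw [hsplit] at hint ⊢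
  rw [setIntegral_union hd measurableSet_Ioi (hint.mono_set subset_union_left)
    (hint.mono_set subset_union_right)]
  have e1 : ∫ y in Ioc (0:ℝ) x, kk α x y = ∫ y in Ioc (0:ℝ) x, x ^ (-α) * y ^ (α-1) :=
    setIntegral_congr_fun measurableSet_Ioc fun y hy => kk_eq_left hx hy
  have e2 : ∫ y in Ioi x, kk α x y = ∫ y in Ioi x, x ^ α * y ^ (-α-1) :=
    setIntegral_congr_fun measurableSet_Ioi fun y hy => kk_eq_right hx hy
  rw [e1, e2, integral_const_mul, integral_const_mul,
    ← intervalIntegral.integral_of_le hx.le,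
    integral_rpow (Or.inl (by linarith : (-1:ℝ) < α - 1)),
    integral_Ioi_rpow_of_lt (by linarith) hx,
    show α - 1 + 1 = α by ring, show -α - 1 + 1 = -α by ring,
    Real.zero_rpow hα.ne']
  have hx1 : x ^ (-α) * x ^ α = 1 := by
    rw [← Real.rpow_add hx]; simp
  field_simp
  linear_combination (2:ℝ) * hx1

lemma kk_lintegral {α : ℝ} (hα : 0 < α) {x : ℝ} (hx : 0 < x) :
    ∫⁻ y in Ioi (0:ℝ), ENNReal.ofReal (kk α x y) = ENNReal.ofReal (2/α) := by
  rw [← ofReal_integral_eq_lintegral_ofReal (kk_integrableOn hα hx) ?_, kk_integral hα hx]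
  filter_upwards [ae_restrict_mem measurableSet_Ioi] with y hy using kk_nonneg hx hy

lemma key_sq {α x y : ℝ} (hx : 0 < x) (hy : 0 < y) :
    ((x*y) ^ (α - 1/2) / max x y ^ (2*α))^2 = kk α x y * kk α y x := by
  have hM : (0:ℝ) < max x y := lt_max_of_lt_left hx
  unfold kk
  rw [max_comm y x, div_mul_div_comm, div_pow, ← Real.rpow_natCast ((x*y)^(α-1/2)) 2,
    ← Real.rpow_natCast ((max x y) ^ (2*α)) 2,
    ← Real.rpow_mul (by positivity), ← Real.rpow_mul hM.le,
    Nat.cast_ofNat, show (α - 1/2)*2 = α + (α-1) by ring,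
    Real.rpow_add (by positivity), Real.mul_rpow hx.le hy.le, Real.mul_rpow hx.le hy.le,
    show 2*α*2 = 2*α + 2*α by ring, Real.rpow_add hM]
  ring

lemma amgm {K k1 k2 a b t : ℝ} (hK : 0 ≤ K) (hsq : K^2 = k1 * k2) (hk1 : 0 ≤ k1)
    (hk2 : 0 ≤ k2) (ha : 0 ≤ a) (hb : 0 ≤ b) (ht : 0 < t) :
    K * a * b ≤ t/2 * (k1 * a^2) + t⁻¹/2 * (k2 * b^2) := by
  have s1 : Real.sqrt k1 * Real.sqrt k1 = k1 := Real.mul_self_sqrt hk1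
  have s2 : Real.sqrt k2 * Real.sqrt k2 = k2 := Real.mul_self_sqrt hk2
  have h1 : K = Real.sqrt k1 * Real.sqrt k2 := by
    rw [← Real.sqrt_mul hk1, ← hsq, Real.sqrt_sq hK]
  have ht' : (0:ℝ) < 2*t := by linarith
  rw [← mul_le_mul_iff_right₀ ht', h1]
  have expand : 2*t*(t/2*(k1*a^2) + t⁻¹/2*(k2*b^2)) = t^2*(k1*a^2) + k2*b^2 := by
    field_simp
  rw [expand]
  calc 2*t*(Real.sqrt k1 * Real.sqrt k2 * a * b)
      ≤ t^2*(Real.sqrt k1*Real.sqrt k1)*a^2 + (Real.sqrt k2*Real.sqrt k2)*b^2 := by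
        nlinarith [sq_nonneg (t * Real.sqrt k1 * a - Real.sqrt k2 * b)]
    _ = t^2*(k1*a^2) + k2*b^2 := by rw [s1, s2]; ring

lemma kk_meas (α : ℝ) : Measurable (fun p : ℝ × ℝ => kk α p.1 p.2) := by
  unfold kk; fun_prop

set_option maxHeartbeats 2000000 in
/-- For `α > 0` and nonnegative measurable `f, g ∈ L²(0,∞)`, the continuous Hilbert-type
form `H_α(f,g) = ∫₀^∞ ∫₀^∞ (xy)^{α-1/2} / max(x,y)^{2α} f(x) g(y) dy dx` is at most
`(2/α) ‖f‖_{L²(0,∞)} ‖g‖_{L²(0,∞)}`. -/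
theorem continuous_form_upper_bound (α : ℝ) (hα : 0 < α) (f g : ℝ → ℝ)
    (hfm : Measurable f) (hgm : Measurable g)
    (hf0 : ∀ x ∈ Set.Ioi (0:ℝ), 0 ≤ f x) (hg0 : ∀ x ∈ Set.Ioi (0:ℝ), 0 ≤ g x)
    (hf2 : IntegrableOn (fun x => f x ^ 2) (Set.Ioi 0))
    (hg2 : IntegrableOn (fun x => g x ^ 2) (Set.Ioi 0)) :
    ∫ x in Set.Ioi (0:ℝ), ∫ y in Set.Ioi (0:ℝ),
        (x * y) ^ (α - 1/2) / (max x y) ^ (2*α) * f x * g y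
      ≤ (2/α) * (Real.sqrt (∫ x in Set.Ioi (0:ℝ), f x ^ 2) *
          Real.sqrt (∫ x in Set.Ioi (0:ℝ), g x ^ 2)) := by
  set If := ∫ x in Set.Ioi (0:ℝ), f x ^ 2 with hIfdef
  set Ig := ∫ x in Set.Ioi (0:ℝ), g x ^ 2 with hIgdef
  have hIf0 : 0 ≤ If := setIntegral_nonneg measurableSet_Ioi fun x _ => sq_nonneg _
  have hIg0 : 0 ≤ Ig := setIntegral_nonneg measurableSet_Ioi fun x _ => sq_nonneg _
  set A := Real.sqrt If with hAdef
  set B := Real.sqrt Ig with hBdef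
  have hA0 : 0 ≤ A := Real.sqrt_nonneg _
  have hB0 : 0 ≤ B := Real.sqrt_nonneg _
  have hRHS0 : 0 ≤ 2/α * (A*B) := by positivity
  have hFm : Measurable (fun p : ℝ × ℝ =>
      (p.1 * p.2) ^ (α - 1/2) / (max p.1 p.2) ^ (2*α) * f p.1 * g p.2) := by fun_prop
  set L : ℝ → ENNReal := fun x => ∫⁻ y in Ioi (0:ℝ),
    ENNReal.ofReal ((x * y) ^ (α - 1/2) / (max x y) ^ (2*α) * f x * g y) with hLdef
  have hLm : Measurable L := by
    exact (hFm.ennreal_ofReal).lintegral_prod_right'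
  have hFnn : ∀ x ∈ Ioi (0:ℝ), ∀ y ∈ Ioi (0:ℝ),
      0 ≤ (x * y) ^ (α - 1/2) / (max x y) ^ (2*α) * f x * g y := by
    intro x hx y hy
    have h1 : (0:ℝ) ≤ (x*y) ^ (α-1/2) := Real.rpow_nonneg (mul_pos hx hy).le _
    have h2 : (0:ℝ) < max x y ^ (2*α) :=
      Real.rpow_pos_of_pos (lt_max_of_lt_left hx) _
    exact mul_nonneg (mul_nonneg (div_nonneg h1 h2.le) (hf0 x hx)) (hg0 y hy)
  have hinner : ∀ x ∈ Ioi (0:ℝ),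
      (∫ y in Ioi (0:ℝ), (x * y) ^ (α - 1/2) / (max x y) ^ (2*α) * f x * g y)
        = (L x).toReal := by
    intro x hx
    rw [hLdef]
    rw [integral_eq_lintegral_of_nonneg_ae]
    · filter_upwards [ae_restrict_mem measurableSet_Ioi] with y hy using hFnn x hx y hy
    · exact (hFm.comp (measurable_const.prodMk measurable_id)).aestronglyMeasurable
  have houter : (∫ x in Ioi (0:ℝ), ∫ y in Ioi (0:ℝ),
        (x * y) ^ (α - 1/2) / (max x y) ^ (2*α) * f x * g y)
      = (∫⁻ x in Ioi (0:ℝ), ENNReal.ofReal ((L x).toReal)).toReal := by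
    rw [setIntegral_congr_fun measurableSet_Ioi hinner,
      integral_eq_lintegral_of_nonneg_ae
        (Filter.Eventually.of_forall fun x => ENNReal.toReal_nonneg)
        hLm.ennreal_toReal.aestronglyMeasurable]
  set D := ∫⁻ x in Ioi (0:ℝ), L x with hDdef
  have hstep : (∫⁻ x in Ioi (0:ℝ), ENNReal.ofReal ((L x).toReal)) ≤ D :=
    lintegral_mono fun x => ENNReal.ofReal_toReal_le
  have hDle : D ≤ ENNReal.ofReal (2/α * (A*B)) := by
    rcases eq_or_lt_of_le hIf0 with hIfz | hIfpos
    · -- ‖f‖ = 0 : f vanishes a.e., so D = 0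
      have hf2z : (fun x => f x ^ 2) =ᵐ[volume.restrict (Ioi (0:ℝ))] 0 := by
        rw [← integral_eq_zero_iff_of_nonneg_ae
          (Filter.Eventually.of_forall fun x => sq_nonneg _) hf2]
        exact hIfz.symm
      have hz : ∀ᵐ x ∂(volume.restrict (Ioi (0:ℝ))), L x = 0 := by
        filter_upwards [hf2z] with x hx
        have hfx : f x = 0 := by
          have := hx
          simpa [pow_eq_zero_iff] using hx
        simp [hLdef, hfx]
      rw [hDdef, lintegral_congr_ae hz, lintegral_zero]
      exact zero_le
    rcases eq_or_lt_of_le hIg0 with hIgz | hIgpos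
    · -- ‖g‖ = 0 : g vanishes a.e., so L x = 0 for every x
      have hg2z : (fun x => g x ^ 2) =ᵐ[volume.restrict (Ioi (0:ℝ))] 0 := by
        rw [← integral_eq_zero_iff_of_nonneg_ae
          (Filter.Eventually.of_forall fun x => sq_nonneg _) hg2]
        exact hIgz.symm
      have hz : ∀ x, L x = 0 := by
        intro x
        rw [hLdef]
        rw [← lintegral_zero (μ := volume.restrict (Ioi (0:ℝ)))]
        apply lintegral_congr_ae
        filter_upwards [hg2z] with y hy
        have hgy : g y = 0 := by simpa [pow_eq_zero_iff] using hy
        simp [hgy]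
      simp only [hDdef, hz, lintegral_zero]
      exact zero_le
    · -- main case
      have hApos : 0 < A := Real.sqrt_pos.mpr hIfpos
      have hBpos : 0 < B := Real.sqrt_pos.mpr hIgpos
      have hIfA : If = A^2 := (Real.sq_sqrt hIf0).symm
      have hIgB : Ig = B^2 := (Real.sq_sqrt hIg0).symm
      set t := B / A with htdef
      have ht : 0 < t := div_pos hBpos hApos
      -- pointwise AM-GM bound
      have hle : ∀ x ∈ Ioi (0:ℝ), ∀ y ∈ Ioi (0:ℝ),
          ENNReal.ofReal ((x * y) ^ (α - 1/2) / (max x y) ^ (2*α) * f x * g y)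
            ≤ ENNReal.ofReal (t/2 * (kk α x y * f x ^ 2))
              + ENNReal.ofReal (t⁻¹/2 * (kk α y x * g y ^ 2)) := by
        intro x hx y hy
        refine le_trans (ENNReal.ofReal_le_ofReal ?_) ENNReal.ofReal_add_le
        have hK0 : (0:ℝ) ≤ (x*y) ^ (α-1/2) / (max x y) ^ (2*α) := by
          have h1 : (0:ℝ) ≤ (x*y) ^ (α-1/2) := Real.rpow_nonneg (mul_pos hx hy).le _
          have h2 : (0:ℝ) < max x y ^ (2*α) :=
            Real.rpow_pos_of_pos (lt_max_of_lt_left hx) _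
          exact div_nonneg h1 h2.le
        exact amgm hK0 (key_sq hx hy) (kk_nonneg hx hy) (kk_nonneg hy hx)
          (hf0 x hx) (hg0 y hy) ht
      have hG1m : Measurable (fun p : ℝ × ℝ =>
          ENNReal.ofReal (t/2 * (kk α p.1 p.2 * f p.1 ^ 2))) := by
        unfold kk; fun_prop
      have hG2m : Measurable (fun p : ℝ × ℝ =>
          ENNReal.ofReal (t⁻¹/2 * (kk α p.2 p.1 * g p.2 ^ 2))) := by
        unfold kk; fun_prop
      -- bound D by the sum of two double integrals
      have hDsum : D ≤ (∫⁻ x in Ioi (0:ℝ), ∫⁻ y in Ioi (0:ℝ),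
            ENNReal.ofReal (t/2 * (kk α x y * f x ^ 2)))
          + ∫⁻ x in Ioi (0:ℝ), ∫⁻ y in Ioi (0:ℝ),
            ENNReal.ofReal (t⁻¹/2 * (kk α y x * g y ^ 2)) := by
        rw [hDdef, ← lintegral_add_left (hG1m.lintegral_prod_right')]
        apply lintegral_mono_ae
        filter_upwards [ae_restrict_mem measurableSet_Ioi] with x hx
        rw [hLdef]
        have hmy : Measurable (fun y : ℝ =>
            ENNReal.ofReal (t/2 * (kk α x y * f x ^ 2))) :=
          hG1m.comp (measurable_const.prodMk measurable_id)
        rw [← lintegral_add_left hmy]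
        apply lintegral_mono_ae
        filter_upwards [ae_restrict_mem measurableSet_Ioi] with y hy
        exact hle x hx y hy
      -- first term
      have hT1 : (∫⁻ x in Ioi (0:ℝ), ∫⁻ y in Ioi (0:ℝ),
            ENNReal.ofReal (t/2 * (kk α x y * f x ^ 2)))
          = ENNReal.ofReal (t/2 * If) * ENNReal.ofReal (2/α) := by
        have hinner1 : ∀ x ∈ Ioi (0:ℝ), (∫⁻ y in Ioi (0:ℝ),
            ENNReal.ofReal (t/2 * (kk α x y * f x ^ 2)))
            = ENNReal.ofReal (t/2 * f x ^ 2) * ENNReal.ofReal (2/α) := by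
          intro x hx
          have hkkm : Measurable fun y => ENNReal.ofReal (kk α x y) :=
            (kk_meas α).ennreal_ofReal.comp (measurable_const.prodMk measurable_id)
          calc (∫⁻ y in Ioi (0:ℝ), ENNReal.ofReal (t/2 * (kk α x y * f x ^ 2)))
              = ∫⁻ y in Ioi (0:ℝ), ENNReal.ofReal (t/2 * f x ^ 2) * ENNReal.ofReal (kk α x y) := by
                apply lintegral_congr fun y => ?_
                rw [show t/2 * (kk α x y * f x ^ 2) = (t/2 * f x ^ 2) * kk α x y by ring,
                  ENNReal.ofReal_mul (by positivity)]
            _ = ENNReal.ofReal (t/2 * f x ^ 2) * ∫⁻ y in Ioi (0:ℝ), ENNReal.ofReal (kk α x y) :=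
                lintegral_const_mul _ hkkm
            _ = ENNReal.ofReal (t/2 * f x ^ 2) * ENNReal.ofReal (2/α) := by
                rw [kk_lintegral hα hx]
        rw [setLIntegral_congr_fun measurableSet_Ioi hinner1,
          lintegral_mul_const _ (by fun_prop),
          ← ofReal_integral_eq_lintegral_ofReal (hf2.const_mul (t/2))
            (by filter_upwards with x using by positivity),
          integral_const_mul]
      -- second term : swap the order of integration
      have hT2 : (∫⁻ x in Ioi (0:ℝ), ∫⁻ y in Ioi (0:ℝ),
            ENNReal.ofReal (t⁻¹/2 * (kk α y x * g y ^ 2)))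
          = ENNReal.ofReal (t⁻¹/2 * Ig) * ENNReal.ofReal (2/α) := by
        rw [lintegral_lintegral_swap hG2m.aemeasurable]
        have hinner2 : ∀ y ∈ Ioi (0:ℝ), (∫⁻ x in Ioi (0:ℝ),
            ENNReal.ofReal (t⁻¹/2 * (kk α y x * g y ^ 2)))
            = ENNReal.ofReal (t⁻¹/2 * g y ^ 2) * ENNReal.ofReal (2/α) := by
          intro y hy
          have hkkm : Measurable fun x => ENNReal.ofReal (kk α y x) :=
            (kk_meas α).ennreal_ofReal.comp (measurable_const.prodMk measurable_id)
          calc (∫⁻ x in Ioi (0:ℝ), ENNReal.ofReal (t⁻¹/2 * (kk α y x * g y ^ 2)))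
              = ∫⁻ x in Ioi (0:ℝ), ENNReal.ofReal (t⁻¹/2 * g y ^ 2) * ENNReal.ofReal (kk α y x) := by
                apply lintegral_congr fun x => ?_
                rw [show t⁻¹/2 * (kk α y x * g y ^ 2) = (t⁻¹/2 * g y ^ 2) * kk α y x by ring,
                  ENNReal.ofReal_mul (by positivity)]
            _ = ENNReal.ofReal (t⁻¹/2 * g y ^ 2) * ∫⁻ x in Ioi (0:ℝ), ENNReal.ofReal (kk α y x) :=
                lintegral_const_mul _ hkkm
            _ = ENNReal.ofReal (t⁻¹/2 * g y ^ 2) * ENNReal.ofReal (2/α) := by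
                rw [kk_lintegral hα hy]
        rw [setLIntegral_congr_fun measurableSet_Ioi hinner2,
          lintegral_mul_const _ (by fun_prop),
          ← ofReal_integral_eq_lintegral_ofReal (hg2.const_mul (t⁻¹/2))
            (by filter_upwards with x using by positivity),
          integral_const_mul]
      have hv1 : t/2 * If * (2/α) = A*B/α := by
        rw [htdef, hIfA]
        field_simp
      have hv2 : t⁻¹/2 * Ig * (2/α) = A*B/α := by
        rw [htdef, hIgB]
        field_simp
      calc D ≤ _ := hDsum
        _ = ENNReal.ofReal (t/2 * If * (2/α)) + ENNReal.ofReal (t⁻¹/2 * Ig * (2/α)) := by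
            rw [hT1, hT2, ← ENNReal.ofReal_mul (by positivity), ← ENNReal.ofReal_mul (by positivity)]
        _ = ENNReal.ofReal (A*B/α) + ENNReal.ofReal (A*B/α) := by rw [hv1, hv2]
        _ = ENNReal.ofReal (2/α * (A*B)) := by
            rw [← ENNReal.ofReal_add (by positivity) (by positivity)]
            congr 1
            ring
  rw [houter]
  exact ENNReal.toReal_le_of_le_ofReal hRHS0 (le_trans hstep hDle)
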